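/- Let X₁ and X₂ be cospectral graphs on v vertices with adjacency matrices A₁, A₂ satisfying L^T A₁ L = A₂ for some orthogonal matrix L. Let F be the flip (swap) operator on R^v ⊗ R^v, R the normalized characteristic matrix of the orbit partition of the flip (so R^T R = I and RR^T = (I+F)/2), and C_i = R^T (A_i⊗I + I⊗A_i) R. Then C₁ and C₂ are similar matrices; in particular the quotients of X₁□X₁ and X₂□X₂ by the flip are cospectral. -/

import Mathlib

open Matrix Kronecker Polynomial

lemma charpoly_similar {ι : Type*} [Fintype ι] [DecidableEq ι]
    (M N : Matrix ι ι ℝ) (h : IsUnit M) :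
    (M⁻¹ * N * M).charpoly = N.charpoly := by
  have hMM : M * M⁻¹ = 1 := mul_nonsing_inv M ((isUnit_iff_isUnit_det M).mp h)
  have key : (M.map C) * charmatrix (M⁻¹ * N * M) = charmatrix N * (M.map C) := by
    simp only [charmatrix, RingHom.mapMatrix_apply]
    rw [Matrix.map_mul, Matrix.map_mul, mul_sub, sub_mul]
    congr 1
    · ext i j
      simp only [Matrix.mul_apply, scalar_apply, diagonal_apply, ite_mul, mul_ite,
        zero_mul, mul_zero, Finset.sum_ite_eq, Finset.sum_ite_eq', Finset.mem_univ, if_true]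
      ring
    · rw [← mul_assoc, ← mul_assoc, ← Matrix.map_mul, hMM,
        Matrix.map_one _ (map_zero C) (map_one C), one_mul]
  have hdetC : (M.map C).det = C M.det := (RingHom.map_det C M).symm
  have hdet : (M.map C).det ≠ 0 := by
    rw [hdetC]
    exact fun hc => ((isUnit_iff_isUnit_det M).mp h).ne_zero (by simpa using hc)
  have h2 := congrArg Matrix.det key
  rw [det_mul, det_mul, mul_comm ((M.map C).det)] at h2
  exact mul_right_cancel₀ hdet h2

theorem flip_quotients_similar {v : ℕ} {ι : Type*} [Fintype ι] [DecidableEq ι]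
    (X₁ X₂ : SimpleGraph (Fin v)) [DecidableRel X₁.Adj] [DecidableRel X₂.Adj]
    (L : Matrix (Fin v) (Fin v) ℝ) (hL : Lᵀ * L = 1)
    (hLA : Lᵀ * X₁.adjMatrix ℝ * L = X₂.adjMatrix ℝ)
    (F : Matrix (Fin v × Fin v) (Fin v × Fin v) ℝ)
    (hF : F = Matrix.of fun p q => if p.1 = q.2 ∧ p.2 = q.1 then (1 : ℝ) else 0)
    (R : Matrix (Fin v × Fin v) ι ℝ)
    (hR1 : Rᵀ * R = 1) (hR2 : R * Rᵀ = (2 : ℝ)⁻¹ • (1 + F))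
    (C₁ C₂ : Matrix ι ι ℝ)
    (hC1 : C₁ = Rᵀ * ((X₁.adjMatrix ℝ) ⊗ₖ (1 : Matrix (Fin v) (Fin v) ℝ)
        + (1 : Matrix (Fin v) (Fin v) ℝ) ⊗ₖ (X₁.adjMatrix ℝ)) * R)
    (hC2 : C₂ = Rᵀ * ((X₂.adjMatrix ℝ) ⊗ₖ (1 : Matrix (Fin v) (Fin v) ℝ)
        + (1 : Matrix (Fin v) (Fin v) ℝ) ⊗ₖ (X₂.adjMatrix ℝ)) * R) :
    (∃ M : Matrix ι ι ℝ, IsUnit M ∧ M⁻¹ * C₁ * M = C₂) ∧ C₁.charpoly = C₂.charpoly := by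
  set A₁ := X₁.adjMatrix ℝ with hA1
  set A₂ := X₂.adjMatrix ℝ with hA2
  -- the flip commutation relation: F (A ⊗ B) = (B ⊗ A) F
  have flip : ∀ (A B : Matrix (Fin v) (Fin v) ℝ), F * (A ⊗ₖ B) = (B ⊗ₖ A) * F := by
    intro A B
    subst hF
    ext ⟨a, b⟩ ⟨c, d⟩
    rw [Matrix.mul_apply, Matrix.mul_apply, Fintype.sum_prod_type, Fintype.sum_prod_type]
    simp only [Matrix.of_apply, kroneckerMap_apply, ite_mul, mul_ite, zero_mul, mul_zero,
      one_mul, mul_one, ite_and, Finset.sum_ite_eq, Finset.sum_ite_eq', Finset.mem_univ,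
      if_true, Finset.sum_ite_irrel, Finset.sum_const_zero]
    ring
  -- main commutation tool
  have hcommF : ∀ (Y : Matrix (Fin v × Fin v) (Fin v × Fin v) ℝ), F * Y = Y * F →
      ∀ (Z : Matrix (Fin v × Fin v) ι ℝ),
      Rᵀ * (Y * (R * (Rᵀ * Z))) = Rᵀ * (Y * Z) := by
    intro Y hY Z
    have hPY : Y * (R * Rᵀ) = (R * Rᵀ) * Y := by
      rw [hR2, Matrix.mul_smul, Matrix.smul_mul, Matrix.mul_add, Matrix.add_mul,
        Matrix.mul_one, Matrix.one_mul, hY]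
    calc Rᵀ * (Y * (R * (Rᵀ * Z))) = Rᵀ * ((Y * (R * Rᵀ)) * Z) := by
          simp only [Matrix.mul_assoc]
      _ = Rᵀ * (((R * Rᵀ) * Y) * Z) := by rw [hPY]
      _ = (Rᵀ * R) * (Rᵀ * (Y * Z)) := by simp only [Matrix.mul_assoc]
      _ = Rᵀ * (Y * Z) := by rw [hR1, Matrix.one_mul]
  set K : Matrix (Fin v × Fin v) (Fin v × Fin v) ℝ := L ⊗ₖ L with hK
  have hKt : Kᵀ = Lᵀ ⊗ₖ Lᵀ := (kroneckerMap_transpose _ _ _).symm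
  have hFK : F * K = K * F := flip L L
  have hFKt : F * Kᵀ = Kᵀ * F := by rw [hKt]; exact flip Lᵀ Lᵀ
  set B₁ := A₁ ⊗ₖ (1 : Matrix (Fin v) (Fin v) ℝ) + (1 : Matrix (Fin v) (Fin v) ℝ) ⊗ₖ A₁
    with hB1
  set B₂ := A₂ ⊗ₖ (1 : Matrix (Fin v) (Fin v) ℝ) + (1 : Matrix (Fin v) (Fin v) ℝ) ⊗ₖ A₂
    with hB2
  have hFB1 : F * B₁ = B₁ * F := by
    rw [hB1, Matrix.mul_add, Matrix.add_mul, flip A₁ 1, flip 1 A₁, add_comm]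
  have hFKB : F * (Kᵀ * B₁) = (Kᵀ * B₁) * F := by
    rw [← Matrix.mul_assoc, hFKt, Matrix.mul_assoc, hFB1, Matrix.mul_assoc]
  have hKtK : Kᵀ * K = 1 := by
    rw [hKt, hK, ← mul_kronecker_mul, hL, one_kronecker_one]
  have hKtB1K : Kᵀ * (B₁ * K) = B₂ := by
    rw [hKt, hK, hB1, hB2, Matrix.add_mul, Matrix.mul_add,
      ← mul_kronecker_mul, ← mul_kronecker_mul, ← mul_kronecker_mul, ← mul_kronecker_mul,
      Matrix.one_mul, hL, ← Matrix.mul_assoc, hLA]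
  set M : Matrix ι ι ℝ := Rᵀ * (K * R) with hM
  have hMt : Mᵀ = Rᵀ * (Kᵀ * R) := by
    rw [hM, Matrix.transpose_mul, Matrix.transpose_mul, Matrix.transpose_transpose,
      Matrix.mul_assoc]
  have hMtM : Mᵀ * M = 1 := by
    calc Mᵀ * M = Rᵀ * (Kᵀ * (R * (Rᵀ * (K * R)))) := by
          rw [hMt, hM]; simp only [Matrix.mul_assoc]
      _ = Rᵀ * (Kᵀ * (K * R)) := hcommF Kᵀ hFKt (K * R)
      _ = Rᵀ * ((Kᵀ * K) * R) := by simp only [Matrix.mul_assoc]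
      _ = Rᵀ * R := by rw [hKtK, Matrix.one_mul]
      _ = 1 := hR1
  have hMunit : IsUnit M := by
    rw [Matrix.isUnit_iff_isUnit_det]
    have := congrArg Matrix.det hMtM
    rw [det_mul, det_transpose, det_one] at this
    exact IsUnit.of_mul_eq_one _ this
  have hMinv : M⁻¹ = Mᵀ := (Matrix.inv_eq_left_inv hMtM).symm ▸ rfl
  have hMinv' : M⁻¹ = Mᵀ := Matrix.inv_eq_left_inv hMtM
  have hconj : Mᵀ * C₁ * M = C₂ := by
    rw [hC1, hC2, hMt, hM]
    calc Rᵀ * (Kᵀ * R) * (Rᵀ * B₁ * R) * (Rᵀ * (K * R))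
        = Rᵀ * (Kᵀ * (R * (Rᵀ * (B₁ * (R * (Rᵀ * (K * R))))))) := by
          simp only [Matrix.mul_assoc]
      _ = Rᵀ * (Kᵀ * (B₁ * (R * (Rᵀ * (K * R))))) := hcommF Kᵀ hFKt _
      _ = Rᵀ * ((Kᵀ * B₁) * (R * (Rᵀ * (K * R)))) := by simp only [Matrix.mul_assoc]
      _ = Rᵀ * ((Kᵀ * B₁) * (K * R)) := hcommF (Kᵀ * B₁) hFKB _
      _ = Rᵀ * (Kᵀ * (B₁ * K)) * R := by simp only [Matrix.mul_assoc]
      _ = Rᵀ * B₂ * R := by rw [hKtB1K]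
  constructor
  · exact ⟨M, hMunit, by rw [hMinv']; exact hconj⟩
  · have : C₂ = M⁻¹ * C₁ * M := by rw [hMinv']; exact hconj.symm
    rw [this, charpoly_similar M C₁ hMunit]
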